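/- For every λ with 0 < λ ≤ 1/3, setting f(λ) = −2λ log_2 λ − (1−2λ) log_2(1−2λ) and τ_λ = ⌈1/(2^{f(λ)} − 1)⌉, the inequality λ < 2^{f(λ)·τ_λ} / (2·τ_λ) holds. -/

import Mathlib

/-- For 0 < λ ≤ 1/3, with f(λ) the ternary entropy and τ_λ = ⌈1/(2^{f(λ)}−1)⌉,
we have λ < 2^{f(λ)τ_λ}/(2τ_λ). -/
theorem stmt_15 (lam : ℝ) (h0 : 0 < lam) (h3 : lam ≤ 1/3) :
    lam <
      (2 : ℝ) ^ ((-(2 * lam * Real.logb 2 lam) -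
          (1 - 2 * lam) * Real.logb 2 (1 - 2 * lam)) *
        (⌈1 / ((2 : ℝ) ^ (-(2 * lam * Real.logb 2 lam) -
          (1 - 2 * lam) * Real.logb 2 (1 - 2 * lam)) - 1)⌉₊ : ℝ)) /
      (2 * (⌈1 / ((2 : ℝ) ^ (-(2 * lam * Real.logb 2 lam) -
          (1 - 2 * lam) * Real.logb 2 (1 - 2 * lam)) - 1)⌉₊ : ℝ)) := by
  set f : ℝ := -(2 * lam * Real.logb 2 lam) -
      (1 - 2 * lam) * Real.logb 2 (1 - 2 * lam) with hf
  set a : ℝ := (2 : ℝ) ^ f with ha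
  set τ : ℕ := ⌈1 / (a - 1)⌉₊ with hτ
  have hl2 : (0 : ℝ) < Real.log 2 := Real.log_pos (by norm_num)
  have h12l : (0 : ℝ) < 1 - 2 * lam := by linarith
  -- f * log 2 in terms of natural logs
  have hflog : f * Real.log 2 =
      -(2 * lam * Real.log lam) - (1 - 2 * lam) * Real.log (1 - 2 * lam) := by
    rw [hf]
    unfold Real.logb
    field_simp
  -- the second entropy term is nonnegative
  have hterm2 : -(1 - 2 * lam) * Real.log (1 - 2 * lam) ≥ 0 := by
    have : Real.log (1 - 2 * lam) ≤ 0 := Real.log_nonpos (by linarith) (by linarith)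
    nlinarith
  -- -log lam > 1
  have hloglam : Real.log lam < -1 := by
    have h1 : Real.log lam ≤ Real.log (1/3) :=
      Real.log_le_log h0 h3
    have h2 : Real.log (1/3) = -Real.log 3 := by
      rw [Real.log_div one_ne_zero (by norm_num), Real.log_one]; ring
    have h3' : (1 : ℝ) < Real.log 3 := by
      rw [Real.lt_log_iff_exp_lt (by norm_num)]
      have := Real.exp_one_lt_d9
      linarith
    linarith
  -- a - 1 > 2 * lam
  have haexp : a = Real.exp (f * Real.log 2) := by
    rw [ha, Real.rpow_def_of_pos (by norm_num : (0:ℝ) < 2)]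
    ring_nf
  have hage : a ≥ f * Real.log 2 + 1 := by
    rw [haexp]
    exact Real.add_one_le_exp _
  have hfl2 : f * Real.log 2 > 2 * lam := by
    rw [hflog]
    nlinarith
  have hag : a - 1 > 2 * lam := by linarith
  have hag0 : 0 < a - 1 := by linarith
  -- τ ≥ 1
  have hτpos : 0 < τ := by
    rw [hτ, Nat.ceil_pos]
    positivity
  have hτ1 : (1 : ℝ) ≤ (τ : ℝ) := by exact_mod_cast hτpos
  -- Bernoulli : (1 + (a-1))^τ ≥ 1 + τ*(a-1)
  have hbern : 1 + (τ : ℝ) * (a - 1) ≤ (1 + (a - 1)) ^ τ :=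
    one_add_mul_le_pow (by linarith : (-2 : ℝ) ≤ a - 1) τ
  have hpow : (2 : ℝ) ^ (f * (τ : ℝ)) = (1 + (a - 1)) ^ τ := by
    rw [show (1 : ℝ) + (a - 1) = a by ring, ha,
      ← Real.rpow_natCast ((2:ℝ) ^ f) τ, ← Real.rpow_mul (by norm_num : (0:ℝ) ≤ 2)]
  rw [hpow, lt_div_iff₀ (by positivity : (0:ℝ) < 2 * (τ : ℝ))]
  nlinarith [mul_pos (lt_of_lt_of_le one_pos hτ1) (sub_pos.mpr (show 2*lam < a - 1 by linarith))]
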